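/- With the automaton B of the paper (states Q± = {a,b,a⁻¹,b⁻¹}, transitions and outputs as specified), for every i ∈ ℕ, every word w ∈ X*₍ᵢ₎, and every ξ ∈ Q±*, the word D_{i,w}(ξ) is freely irreducible if and only if ξ is freely irreducible, where a word q₁…q_n ∈ Q±* is freely irreducible if no two-letter subword q_j q_{j+1} lies in {aa⁻¹, a⁻¹a, bb⁻¹, b⁻¹b}. -/

import Mathlib

/-- The four states `a, b, a⁻¹, b⁻¹` of the automaton `B`. -/
inductive Qpm
  | a | b | ai | bi
  deriving DecidableEq

open Qpm

/-- The `r`-cycle `σ = (1,2,…,r)` on `{1,…,r}`. -/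
def csigma (r x : ℕ) : ℕ := if x = r then 1 else x + 1

/-- The inverse of the `r`-cycle `σ`. -/
def csigmaInv (r x : ℕ) : ℕ := if x = 1 then r else x - 1

/-- The transposition `τ = (1,2)`. -/
def ctau (x : ℕ) : ℕ := if x = 1 then 2 else if x = 2 then 1 else x

/-- The transition function of the automaton `B`: states are fixed on letters
other than 1,2; on letter 1 it swaps `a ↔ b`; on letter 2 it swaps `a⁻¹ ↔ b⁻¹`. -/
def phiB (x : ℕ) (q : Qpm) : Qpm :=
  if x = 1 then
    (match q with
     | a => b
     | b => a
     | q => q)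
  else if x = 2 then
    (match q with
     | ai => bi
     | bi => ai
     | q => q)
  else q

/-- The output function of `B`: `σᵢ` at `a`, `σᵢ⁻¹` at `a⁻¹`, `τ` at `b, b⁻¹`. -/
def psiB (ri : ℕ) (q : Qpm) (x : ℕ) : ℕ :=
  match q with
  | a => csigma ri x
  | ai => csigmaInv ri x
  | _ => ctau x

/-- The dual mapping `D_{i,x}` of the automaton `B` (over `Xᵢ = {1,…,rᵢ}`). -/
def dualB (r : ℕ → ℕ) (i : ℕ) : ℕ → List Qpm → List Qpm
  | _, [] => []
  | x, q :: qs => phiB x q :: dualB r i (psiB (r i) q x) qs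

/-- `D_{i,w}`, the composition of dual mappings of `B` along the word `w`. -/
def dualWB (r : ℕ → ℕ) : ℕ → List ℕ → List Qpm → List Qpm
  | _, [], ξ => ξ
  | i, x :: xs, ξ => dualWB r (i + 1) xs (dualB r i x ξ)

/-- The formal inverse of a state. -/
def qinv : Qpm → Qpm
  | a => ai
  | ai => a
  | b => bi
  | bi => b

/-- The swap `a ↔ b`, `a⁻¹ ↔ b⁻¹` (the tilde operation). -/
def til : Qpm → Qpm
  | a => b
  | b => a
  | ai => bi
  | bi => ai

/-- The pattern symbol of a state: `true` stands for `*`, `false` for `*⁻¹`. -/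
def patt : Qpm → Bool
  | a => true
  | b => true
  | _ => false

/-- A word over `Q±` is freely irreducible if no two consecutive letters are
mutually inverse. -/
def FreelyIrred (ξ : List Qpm) : Prop := List.Chain' (fun p q => q ≠ qinv p) ξ

/-- A word over the changing alphabet `Xᵢ = {1,…,rᵢ}`, starting at index `i`. -/
def ValidB (r : ℕ → ℕ) : ℕ → List ℕ → Prop
  | _, [] => True
  | i, x :: xs => x ∈ Set.Icc 1 (r i) ∧ ValidB r (i + 1) xs

lemma psiB_range (ri : ℕ) (hri : 2 ≤ ri) (q : Qpm) (x : ℕ)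
    (h1 : 1 ≤ x) (h2 : x ≤ ri) : 1 ≤ psiB ri q x ∧ psiB ri q x ≤ ri := by
  cases q <;> simp [psiB, csigma, csigmaInv, ctau] <;> split_ifs <;> omega

lemma phiB_local (ri : ℕ) (hri : 2 ≤ ri) (q p : Qpm) (x : ℕ)
    (h1 : 1 ≤ x) (h2 : x ≤ ri) :
    (phiB (psiB ri q x) p = qinv (phiB x q) ↔ p = qinv q) := by
  cases q <;> cases p <;>
    simp [phiB, psiB, csigma, csigmaInv, ctau, qinv] <;>
    split_ifs <;> simp_all <;> omega

lemma dualB_irred (r : ℕ → ℕ) (i : ℕ) (hri : 2 ≤ r i) :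
    ∀ (ξ : List Qpm) (x : ℕ), 1 ≤ x → x ≤ r i →
      (FreelyIrred (dualB r i x ξ) ↔ FreelyIrred ξ) := by
  intro ξ
  induction ξ with
  | nil => intro x _ _; simp [dualB]
  | cons q qs ih =>
    intro x h1 h2
    cases qs with
    | nil => simp [dualB, FreelyIrred, List.Chain']
    | cons p ps =>
      have hx' := psiB_range (r i) hri q x h1 h2
      have := ih (psiB (r i) q x) hx'.1 hx'.2
      simp only [dualB, FreelyIrred, List.Chain', List.isChain_cons_cons] at *
      rw [ne_eq, phiB_local (r i) hri q p x h1 h2, this]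

/-- for every `i`, every word `w ∈ X*₍ᵢ₎` and every `ξ ∈ Q±*`,
the word `D_{i,w}(ξ)` is freely irreducible iff `ξ` is freely irreducible. -/
theorem dualWB_freelyIrred_iff
    (r : ℕ → ℕ) (hmono : Monotone r) (hge : ∀ i, 2 ≤ r i)
    (hunb : ∀ N, ∃ i, N < r i) :
    ∀ (i : ℕ) (w : List ℕ), ValidB r i w → ∀ ξ : List Qpm,
      (FreelyIrred (dualWB r i w ξ) ↔ FreelyIrred ξ) := by
  intro i w
  induction w generalizing i with
  | nil => intro _ ξ; simp [dualWB]
  | cons x xs ih =>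
    intro hv ξ
    obtain ⟨⟨h1, h2⟩, hv'⟩ := hv
    rw [dualWB, ih (i + 1) hv', dualB_irred r i (hge i) ξ x h1 h2]
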